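/- Let k ∈ ℕ and let α, β, M, x be real numbers such that (−M)_i ≠ 0, (−(M−1))_i ≠ 0 and (α+1)_i ≠ 0 for all 0 ≤ i ≤ k. Then x·Q_k(x−1; α, β, M−1) + (M−x)·Q_k(x; α, β, M−1) = M·Q_k(x; α, β, M). -/

import Mathlib

/-- The Pochhammer symbol `(a)_i = a(a+1)⋯(a+i−1)`, with `(a)_0 = 1`. -/
noncomputable def poch (a : ℝ) (i : ℕ) : ℝ := ∏ j ∈ Finset.range i, (a + j)

/-- The Hahn polynomial
`Q_k(x; α, β, M) = Σ_{i=0}^{k} (−k)_i (−x)_i (k+α+β+1)_i / ((−M)_i (α+1)_i i!)`. -/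
noncomputable def hahnQ (k : ℕ) (x α β M : ℝ) : ℝ :=
  ∑ i ∈ Finset.range (k + 1),
    poch (-(k : ℝ)) i * poch (-x) i * poch ((k : ℝ) + α + β + 1) i /
      (poch (-M) i * poch (α + 1) i * (Nat.factorial i : ℝ))

lemma poch_succ_left (a : ℝ) (i : ℕ) : poch a (i + 1) = a * poch (a + 1) i := by
  induction i with
  | zero => simp [poch]
  | succ n ih =>
    rw [poch, Finset.prod_range_succ, ← poch, ih]
    conv_rhs => rw [poch, Finset.prod_range_succ, ← poch]
    push_cast
    ring

lemma poch_key (y : ℝ) (i : ℕ) : y * poch (-(y - 1)) i = (y - i) * poch (-y) i := by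
  cases i with
  | zero => simp [poch]
  | succ n =>
    rw [poch, Finset.prod_range_succ, ← poch, poch_succ_left]
    have : -y + 1 = -(y - 1) := by ring
    rw [this]
    push_cast
    ring

theorem stmt_5 (k : ℕ) (α β M x : ℝ)
    (h1 : ∀ i ≤ k, poch (-M) i ≠ 0)
    (h2 : ∀ i ≤ k, poch (-(M - 1)) i ≠ 0)
    (h3 : ∀ i ≤ k, poch (α + 1) i ≠ 0) :
    x * hahnQ k (x - 1) α β (M - 1) + (M - x) * hahnQ k x α β (M - 1)
      = M * hahnQ k x α β M := by
  unfold hahnQ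
  rw [Finset.mul_sum, Finset.mul_sum, Finset.mul_sum, ← Finset.sum_add_distrib]
  refine Finset.sum_congr rfl ?_
  intro i hi
  have hi' : i ≤ k := Nat.lt_succ_iff.mp (Finset.mem_range.mp hi)
  have hM := h1 i hi'
  have hM1 := h2 i hi'
  have hA := h3 i hi'
  have hfac : (Nat.factorial i : ℝ) ≠ 0 := Nat.cast_ne_zero.mpr i.factorial_ne_zero
  have e1 := poch_key x i
  have e2 := poch_key M i
  field_simp
  linear_combination (poch (-(k:ℝ)) i * poch ((k:ℝ) + α + β + 1) i * poch (-M) i) * e1 -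
    (poch (-(k:ℝ)) i * poch ((k:ℝ) + α + β + 1) i * poch (-x) i) * e2
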